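/- Let ρ* be a finitely supported discrete probability measure on ℝ^d with R = sup{‖θ‖ : θ ∈ supp(ρ*)} < ∞, let ρ^σ = ρ* ∗ N(0, σ²I_d), and let ρ₀ = N(0, β²I_d). Then KL(ρ^σ ‖ ρ₀) ≤ d log(β/σ) + (dσ² + R²)/(2β²) − d/2. -/

import Mathlib

open MeasureTheory
open Real

/-- Density of the centered isotropic Gaussian `N(0, s² I_d)` on `ℝ^d`. -/
noncomputable def gaussDens (d : ℕ) (s : ℝ) (x : EuclideanSpace ℝ (Fin d)) : ℝ :=
  (2 * Real.pi * s ^ 2) ^ (-(d : ℝ) / 2) * Real.exp (-‖x‖ ^ 2 / (2 * s ^ 2))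



noncomputable def g1 (s : ℝ) (t : ℝ) : ℝ :=
  (2 * Real.pi * s ^ 2) ^ (-(1:ℝ) / 2) * Real.exp (-t ^ 2 / (2 * s ^ 2))

variable {s : ℝ}

lemma expo_eq (hs : 0 < s) (t : ℝ) : -t ^ 2 / (2 * s ^ 2) = -((2 * s ^ 2)⁻¹) * t ^ 2 := by
  field_simp

lemma rpow_two_eq (t : ℝ) : t ^ (2:ℝ) = t ^ 2 := by
  rw [show ((2:ℝ)) = ((2:ℕ):ℝ) by norm_num, Real.rpow_natCast]

lemma integrable_g1 (hs : 0 < s) : Integrable (g1 s) := by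
  have hb : 0 < (2 * s ^ 2)⁻¹ := by positivity
  unfold g1
  simp_rw [expo_eq hs]
  exact (integrable_exp_neg_mul_sq hb).const_mul _

lemma integrable_g1_sq (hs : 0 < s) : Integrable (fun t => g1 s t * t ^ 2) := by
  have hb : 0 < (2 * s ^ 2)⁻¹ := by positivity
  have h := integrable_rpow_mul_exp_neg_mul_sq hb (by norm_num : (-1:ℝ) < 2)
  simp_rw [rpow_two_eq] at h
  unfold g1
  simp_rw [expo_eq hs]
  have : (fun t : ℝ => (2 * Real.pi * s ^ 2) ^ (-(1:ℝ) / 2) * Real.exp (-(2 * s ^ 2)⁻¹ * t ^ 2) * t ^ 2)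
      = fun t : ℝ => (2 * Real.pi * s ^ 2) ^ (-(1:ℝ) / 2) * (t ^ 2 * Real.exp (-(2 * s ^ 2)⁻¹ * t ^ 2)) := by
    funext t; ring
  rw [this]
  exact h.const_mul _

lemma integral_g1 (hs : 0 < s) : ∫ t, g1 s t = 1 := by
  have hb : 0 < (2 * s ^ 2)⁻¹ := by positivity
  have ha : 0 < 2 * Real.pi * s ^ 2 := by positivity
  unfold g1
  simp_rw [expo_eq hs]
  rw [integral_const_mul, integral_gaussian,
    show Real.pi / (2 * s ^ 2)⁻¹ = 2 * Real.pi * s ^ 2 by field_simp,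
    Real.sqrt_eq_rpow, ← Real.rpow_add ha]
  norm_num

lemma integral_g1_sq (hs : 0 < s) : ∫ t, g1 s t * t ^ 2 = s ^ 2 := by
  have hb : 0 < (2 * s ^ 2)⁻¹ := by positivity
  have hA : (0:ℝ) < 2 * s ^ 2 := by positivity
  have habs := integral_comp_abs (f := fun u : ℝ => u ^ 2 * Real.exp (-(2 * s ^ 2)⁻¹ * u ^ 2))
  simp only [sq_abs] at habs
  have h2 := integral_rpow_mul_exp_neg_mul_rpow (p := 2) (q := 2) (b := (2 * s ^ 2)⁻¹)
    (by norm_num) (by norm_num) hb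
  simp_rw [rpow_two_eq] at h2
  rw [h2] at habs
  have hg : Real.Gamma (((2:ℝ) + 1) / 2) = Real.pi ^ ((1:ℝ)/2) / 2 := by
    rw [show ((2:ℝ)+1)/2 = 1/2 + 1 by norm_num, Real.Gamma_add_one (by norm_num : (1/2:ℝ) ≠ 0),
      Real.Gamma_one_half_eq, Real.sqrt_eq_rpow]
    ring
  rw [hg, show (-((2:ℝ)+1)/2) = -(3:ℝ)/2 by norm_num,
    Real.inv_rpow hA.le, ← Real.rpow_neg hA.le] at habs
  unfold g1
  simp_rw [expo_eq hs]
  have hcomm : (fun t : ℝ => (2 * Real.pi * s ^ 2) ^ (-(1:ℝ) / 2) * Real.exp (-(2 * s ^ 2)⁻¹ * t ^ 2) * t ^ 2)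
      = fun t : ℝ => (2 * Real.pi * s ^ 2) ^ (-(1:ℝ) / 2) * (t ^ 2 * Real.exp (-(2 * s ^ 2)⁻¹ * t ^ 2)) := by
    funext t; ring
  rw [hcomm, integral_const_mul, habs,
    show (2 * Real.pi * s ^ 2) = Real.pi * (2 * s ^ 2) by ring,
    Real.mul_rpow Real.pi_pos.le hA.le]
  have e1 : Real.pi ^ (-(1:ℝ)/2) * Real.pi ^ ((1:ℝ)/2) = 1 := by
    rw [← Real.rpow_add Real.pi_pos]; norm_num
  have e2 : (2 * s ^ 2) ^ (-(1:ℝ)/2) * (2 * s ^ 2) ^ (-(-(3:ℝ)/2)) = 2 * s ^ 2 := by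
    rw [← Real.rpow_add hA]; norm_num
  calc Real.pi ^ (-(1:ℝ)/2) * (2 * s ^ 2) ^ (-(1:ℝ)/2) *
        (2 * ((2 * s ^ 2) ^ (-(-(3:ℝ)/2)) * (1/2) * (Real.pi ^ ((1:ℝ)/2) / 2)))
      = (Real.pi ^ (-(1:ℝ)/2) * Real.pi ^ ((1:ℝ)/2)) *
        ((2 * s ^ 2) ^ (-(1:ℝ)/2) * (2 * s ^ 2) ^ (-(-(3:ℝ)/2))) / 2 := by ring
    _ = s ^ 2 := by rw [e1, e2]; ring
section multi
variable {d : ℕ}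







lemma eucl_normsq (y : Fin d → ℝ) :
    ‖(MeasurableEquiv.toLp 2 (Fin d → ℝ)) y‖ ^ 2 = ∑ i, (y i) ^ 2 := by
  simp only [MeasurableEquiv.toLp_apply,
    EuclideanSpace.norm_eq, PiLp.toLp_apply, Real.norm_eq_abs, sq_abs]
  rw [Real.sq_sqrt]
  exact Finset.sum_nonneg fun i _ => by positivity

lemma gaussDens_factor (hs : 0 < s) (y : Fin d → ℝ) :
    gaussDens d s ((MeasurableEquiv.toLp 2 (Fin d → ℝ)) y) = ∏ i, g1 s (y i) := by
  have ha : (0:ℝ) < 2 * Real.pi * s ^ 2 := by positivity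
  unfold gaussDens g1
  rw [eucl_normsq, Finset.prod_mul_distrib, Finset.prod_const, Finset.card_univ,
    Fintype.card_fin,
    show -(∑ i, (y i) ^ 2) / (2 * s ^ 2) = ∑ i, (-(y i) ^ 2 / (2 * s ^ 2)) by
      rw [← Finset.sum_div, ← Finset.sum_neg_distrib],
    Real.exp_sum,
    show ((2 * Real.pi * s ^ 2) ^ (-(1:ℝ)/2)) ^ d = (2 * Real.pi * s ^ 2) ^ (-(d:ℝ)/2) by
      rw [← Real.rpow_natCast ((2 * Real.pi * s ^ 2) ^ (-(1:ℝ)/2)) d, ← Real.rpow_mul ha.le]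
      congr 1; ring]
end multi

section multi2
variable {d : ℕ} {s : ℝ}

lemma integrable_gaussDens (hs : 0 < s) : Integrable (gaussDens d s) := by
  rw [← MeasurePreserving.integrable_comp_emb
    (EuclideanSpace.volume_preserving_symm_measurableEquiv_toLp (Fin d)).symm
    (MeasurableEquiv.measurableEmbedding _), MeasurableEquiv.symm_symm]
  have : gaussDens d s ∘ (MeasurableEquiv.toLp 2 (Fin d → ℝ))
      = fun y => ∏ i, g1 s (y i) := funext fun y => gaussDens_factor hs y
  rw [this]
  exact Integrable.fintype_prod fun _ => integrable_g1 hs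

lemma integral_gaussDens (hs : 0 < s) : ∫ x, gaussDens d s x = 1 := by
  rw [← MeasurePreserving.integral_comp
    (EuclideanSpace.volume_preserving_symm_measurableEquiv_toLp (Fin d)).symm
    (MeasurableEquiv.measurableEmbedding _), MeasurableEquiv.symm_symm]
  simp_rw [gaussDens_factor hs]
  rw [integral_fintype_prod_volume_eq_prod (fun _ => g1 s)]
  simp [integral_g1 hs]

lemma pi_prod_mul_sq (y : Fin d → ℝ) (j : Fin d) :
    (∏ i, g1 s (y i)) * (y j) ^ 2
      = ∏ i, (if i = j then g1 s (y i) * (y i) ^ 2 else g1 s (y i)) := by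
  rw [← Finset.mul_prod_erase Finset.univ
      (fun i => if i = j then g1 s (y i) * (y i) ^ 2 else g1 s (y i)) (Finset.mem_univ j),
    ← Finset.mul_prod_erase Finset.univ (fun i => g1 s (y i)) (Finset.mem_univ j),
    if_pos rfl,
    Finset.prod_congr rfl (fun i hi => if_neg (Finset.ne_of_mem_erase hi))]
  ring

lemma integrable_pi_component (hs : 0 < s) (j : Fin d) :
    Integrable (fun y : Fin d → ℝ => (∏ i, g1 s (y i)) * (y j) ^ 2) := by
  simp_rw [pi_prod_mul_sq]
  exact Integrable.fintype_prod
    (f := fun i t => if i = j then g1 s t * t ^ 2 else g1 s t)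
    (fun i => by
      by_cases h : i = j
      · simpa [h] using integrable_g1_sq hs
      · simpa [h] using integrable_g1 hs)

lemma integral_pi_component (hs : 0 < s) (j : Fin d) :
    ∫ y : Fin d → ℝ, (∏ i, g1 s (y i)) * (y j) ^ 2 = s ^ 2 := by
  simp_rw [pi_prod_mul_sq]
  rw [integral_fintype_prod_volume_eq_prod (fun i t => if i = j then g1 s t * t ^ 2 else g1 s t)]
  rw [Finset.prod_eq_single j
    (fun i _ hne => by simp only [if_neg hne]; exact integral_g1 hs)
    (fun h => absurd (Finset.mem_univ j) h)]
  simp only [if_pos rfl]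
  exact integral_g1_sq hs

lemma integrable_gaussDens_normsq (hs : 0 < s) :
    Integrable (fun x : EuclideanSpace ℝ (Fin d) => gaussDens d s x * ‖x‖ ^ 2) := by
  rw [← MeasurePreserving.integrable_comp_emb
    (EuclideanSpace.volume_preserving_symm_measurableEquiv_toLp (Fin d)).symm
    (MeasurableEquiv.measurableEmbedding _), MeasurableEquiv.symm_symm]
  have : (fun x : EuclideanSpace ℝ (Fin d) => gaussDens d s x * ‖x‖ ^ 2)
      ∘ (MeasurableEquiv.toLp 2 (Fin d → ℝ))
      = fun y => ∑ j, (∏ i, g1 s (y i)) * (y j) ^ 2 := by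
    funext y
    simp only [Function.comp_apply, gaussDens_factor hs, eucl_normsq, Finset.mul_sum]
  rw [this]
  exact integrable_finset_sum _ fun j _ => integrable_pi_component hs j

lemma integral_gaussDens_normsq (hs : 0 < s) :
    ∫ x : EuclideanSpace ℝ (Fin d), gaussDens d s x * ‖x‖ ^ 2 = d * s ^ 2 := by
  rw [← MeasurePreserving.integral_comp
    (EuclideanSpace.volume_preserving_symm_measurableEquiv_toLp (Fin d)).symm
    (MeasurableEquiv.measurableEmbedding _), MeasurableEquiv.symm_symm]
  simp_rw [gaussDens_factor hs, eucl_normsq, Finset.mul_sum]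
  rw [integral_finset_sum _ fun j _ => integrable_pi_component hs j]
  simp [integral_pi_component hs]

end multi2

section comp
open scoped RealInnerProductSpace
variable {d : ℕ} {s σ β : ℝ}

lemma gaussDens_pos (hs : 0 < s) (x : EuclideanSpace ℝ (Fin d)) : 0 < gaussDens d s x := by
  unfold gaussDens; positivity

lemma gaussDens_continuous (s : ℝ) : Continuous (gaussDens d s) := by
  unfold gaussDens; fun_prop

lemma log_gaussDens (hs : 0 < s) (x : EuclideanSpace ℝ (Fin d)) :
    Real.log (gaussDens d s x)
      = (-(d:ℝ)/2) * Real.log (2 * Real.pi * s ^ 2) - ‖x‖ ^ 2 / (2 * s ^ 2) := by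
  unfold gaussDens
  rw [Real.log_mul (by positivity) (Real.exp_ne_zero _),
    Real.log_rpow (by positivity), Real.log_exp]
  ring

lemma integrable_gaussDens_shift (hs : 0 < s) (θ : EuclideanSpace ℝ (Fin d)) :
    Integrable (fun x => gaussDens d s (x - θ)) :=
  (integrable_gaussDens hs).comp_sub_right θ

lemma integral_gaussDens_shift (hs : 0 < s) (θ : EuclideanSpace ℝ (Fin d)) :
    ∫ x, gaussDens d s (x - θ) = 1 := by
  rw [integral_sub_right_eq_self (gaussDens d s) θ]; exact integral_gaussDens hs

lemma integrable_shift_normsq (hs : 0 < s) (θ : EuclideanSpace ℝ (Fin d)) :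
    Integrable (fun x => gaussDens d s (x - θ) * ‖x - θ‖ ^ 2) :=
  (integrable_gaussDens_normsq hs).comp_sub_right θ

lemma integral_shift_normsq (hs : 0 < s) (θ : EuclideanSpace ℝ (Fin d)) :
    ∫ x, gaussDens d s (x - θ) * ‖x - θ‖ ^ 2 = d * s ^ 2 := by
  rw [integral_sub_right_eq_self (fun y => gaussDens d s y * ‖y‖ ^ 2) θ]
  exact integral_gaussDens_normsq hs

lemma integrable_gaussDens_inner (hs : 0 < s) (θ : EuclideanSpace ℝ (Fin d)) :
    Integrable (fun x : EuclideanSpace ℝ (Fin d) => gaussDens d s x * ⟪x, θ⟫) := by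
  refine Integrable.mono'
    (g := fun x => ‖θ‖ * (gaussDens d s x + gaussDens d s x * ‖x‖ ^ 2))
    (((integrable_gaussDens hs).add (integrable_gaussDens_normsq hs)).const_mul _)
    (((gaussDens_continuous s).mul (continuous_id.inner continuous_const)).aestronglyMeasurable)
    (Filter.Eventually.of_forall fun x => ?_)
  have h1 : |⟪x, θ⟫| ≤ ‖x‖ * ‖θ‖ := abs_real_inner_le_norm x θ
  have h2 : (0:ℝ) < gaussDens d s x := gaussDens_pos hs x
  have h3 : ‖x‖ ≤ 1 + ‖x‖ ^ 2 := by nlinarith [norm_nonneg x, sq_nonneg (‖x‖ - 1)]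
  rw [Real.norm_eq_abs, abs_mul, abs_of_pos h2]
  calc gaussDens d s x * |⟪x, θ⟫| ≤ gaussDens d s x * (‖x‖ * ‖θ‖) := by
        exact mul_le_mul_of_nonneg_left h1 h2.le
    _ ≤ ‖θ‖ * (gaussDens d s x + gaussDens d s x * ‖x‖ ^ 2) := by
        nlinarith [norm_nonneg θ, h2.le, mul_le_mul_of_nonneg_left h3 h2.le]

lemma integral_gaussDens_inner (hs : 0 < s) (θ : EuclideanSpace ℝ (Fin d)) :
    ∫ x : EuclideanSpace ℝ (Fin d), gaussDens d s x * ⟪x, θ⟫ = 0 := by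
  have h1 : ∫ x : EuclideanSpace ℝ (Fin d), gaussDens d s (-x) * ⟪-x, θ⟫
      = ∫ x : EuclideanSpace ℝ (Fin d), gaussDens d s x * ⟪x, θ⟫ :=
    integral_neg_eq_self (fun x : EuclideanSpace ℝ (Fin d) => gaussDens d s x * ⟪x, θ⟫) _
  have h2 : ∀ x : EuclideanSpace ℝ (Fin d),
      gaussDens d s (-x) * ⟪-x, θ⟫ = -(gaussDens d s x * ⟪x, θ⟫) := by
    intro x
    have : gaussDens d s (-x) = gaussDens d s x := by unfold gaussDens; rw [norm_neg]
    rw [this, inner_neg_left]; ring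
  simp_rw [h2, integral_neg] at h1
  linarith

lemma integrable_shift_xnormsq (hs : 0 < s) (θ : EuclideanSpace ℝ (Fin d)) :
    Integrable (fun x => gaussDens d s (x - θ) * ‖x‖ ^ 2) := by
  have key : (fun x : EuclideanSpace ℝ (Fin d) => gaussDens d s (x - θ) * ‖x‖ ^ 2)
      = fun x => (fun y : EuclideanSpace ℝ (Fin d) =>
          gaussDens d s y * ‖y‖ ^ 2 + (2 * (gaussDens d s y * ⟪y, θ⟫)
            + ‖θ‖ ^ 2 * gaussDens d s y)) (x - θ) := by
    funext x
    simp only [sub_add_cancel]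
    rw [show x = (x - θ) + θ by abel, show x - θ + θ - θ = x - θ by abel,
      norm_add_sq_real]
    ring
  rw [key]
  exact (((integrable_gaussDens_normsq hs).add
    (((integrable_gaussDens_inner hs θ).const_mul 2).add
      ((integrable_gaussDens hs).const_mul _))).comp_sub_right θ)

lemma integral_shift_xnormsq (hs : 0 < s) (θ : EuclideanSpace ℝ (Fin d)) :
    ∫ x, gaussDens d s (x - θ) * ‖x‖ ^ 2 = d * s ^ 2 + ‖θ‖ ^ 2 := by
  calc ∫ x, gaussDens d s (x - θ) * ‖x‖ ^ 2
      = ∫ x, gaussDens d s (x - θ) * ‖(x - θ) + θ‖ ^ 2 := by simp only [sub_add_cancel]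
    _ = ∫ y, gaussDens d s y * ‖y + θ‖ ^ 2 :=
        integral_sub_right_eq_self (fun y => gaussDens d s y * ‖y + θ‖ ^ 2) θ
    _ = ∫ y, (gaussDens d s y * ‖y‖ ^ 2 + (2 * (gaussDens d s y * ⟪y, θ⟫)
          + ‖θ‖ ^ 2 * gaussDens d s y)) := by
        congr 1; funext y; rw [norm_add_sq_real]; ring
    _ = ↑d * s ^ 2 + ‖θ‖ ^ 2 := by
        have hg1 : Integrable (fun y : EuclideanSpace ℝ (Fin d) =>
            2 * (gaussDens d s y * ⟪y, θ⟫) + ‖θ‖ ^ 2 * gaussDens d s y) := by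
          exact ((integrable_gaussDens_inner hs θ).const_mul 2).add
            ((integrable_gaussDens hs).const_mul _)
        have hg2 : Integrable (fun y : EuclideanSpace ℝ (Fin d) =>
            2 * (gaussDens d s y * ⟪y, θ⟫)) := by
          exact (integrable_gaussDens_inner hs θ).const_mul 2
        have hg3 : Integrable (fun y : EuclideanSpace ℝ (Fin d) =>
            ‖θ‖ ^ 2 * gaussDens d s y) := by
          exact (integrable_gaussDens hs).const_mul _
        rw [integral_add (integrable_gaussDens_normsq hs) hg1,
          integral_add hg2 hg3,
          integral_const_mul, integral_const_mul,
          integral_gaussDens_normsq hs, integral_gaussDens_inner hs θ, integral_gaussDens hs]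
        ring

end comp

section kl
variable {d : ℕ} {σ β : ℝ}

lemma component_eq (hσ : 0 < σ) (hβ : 0 < β) (θ : EuclideanSpace ℝ (Fin d))
    (x : EuclideanSpace ℝ (Fin d)) :
    gaussDens d σ (x - θ) * Real.log (gaussDens d σ (x - θ) / gaussDens d β x)
      = ((-(d:ℝ)/2) * Real.log (2 * Real.pi * σ ^ 2)
          - (-(d:ℝ)/2) * Real.log (2 * Real.pi * β ^ 2)) * gaussDens d σ (x - θ)
        - (1/(2*σ^2)) * (gaussDens d σ (x - θ) * ‖x - θ‖ ^ 2)
        + (1/(2*β^2)) * (gaussDens d σ (x - θ) * ‖x‖ ^ 2) := by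
  rw [Real.log_div (gaussDens_pos hσ _).ne' (gaussDens_pos hβ _).ne',
    log_gaussDens hσ, log_gaussDens hβ]
  have h1 : σ ^ 2 ≠ 0 := by positivity
  have h2 : β ^ 2 ≠ 0 := by positivity
  field_simp
  ring

lemma integrable_component (hσ : 0 < σ) (hβ : 0 < β) (θ : EuclideanSpace ℝ (Fin d)) :
    Integrable (fun x => gaussDens d σ (x - θ)
      * Real.log (gaussDens d σ (x - θ) / gaussDens d β x)) := by
  simp_rw [component_eq hσ hβ θ]
  exact (((integrable_gaussDens_shift hσ θ).const_mul _).sub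
    ((integrable_shift_normsq hσ θ).const_mul _)).add
    ((integrable_shift_xnormsq hσ θ).const_mul _)

lemma integral_component (hσ : 0 < σ) (hβ : 0 < β) (θ : EuclideanSpace ℝ (Fin d)) :
    ∫ x, gaussDens d σ (x - θ) * Real.log (gaussDens d σ (x - θ) / gaussDens d β x)
      = d * Real.log (β / σ) + (d * σ ^ 2 + ‖θ‖ ^ 2) / (2 * β ^ 2) - d / 2 := by
  simp_rw [component_eq hσ hβ θ]
  have hA : Integrable (fun x => ((-(d:ℝ)/2) * Real.log (2 * Real.pi * σ ^ 2)
      - (-(d:ℝ)/2) * Real.log (2 * Real.pi * β ^ 2)) * gaussDens d σ (x - θ)) := by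
    exact (integrable_gaussDens_shift hσ θ).const_mul _
  have hB : Integrable (fun x => (1/(2*σ^2)) * (gaussDens d σ (x - θ) * ‖x - θ‖ ^ 2)) := by
    exact (integrable_shift_normsq hσ θ).const_mul _
  have hC : Integrable (fun x => (1/(2*β^2)) * (gaussDens d σ (x - θ) * ‖x‖ ^ 2)) := by
    exact (integrable_shift_xnormsq hσ θ).const_mul _
  have hAB : Integrable (fun x => ((-(d:ℝ)/2) * Real.log (2 * Real.pi * σ ^ 2)
      - (-(d:ℝ)/2) * Real.log (2 * Real.pi * β ^ 2)) * gaussDens d σ (x - θ)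
      - (1/(2*σ^2)) * (gaussDens d σ (x - θ) * ‖x - θ‖ ^ 2)) := by
    exact hA.sub hB
  rw [integral_add hAB hC, integral_sub hA hB,
    integral_const_mul, integral_const_mul, integral_const_mul,
    integral_gaussDens_shift hσ θ, integral_shift_normsq hσ θ, integral_shift_xnormsq hσ θ]
  have hlσ : Real.log (2 * Real.pi * σ ^ 2) = Real.log (2 * Real.pi) + 2 * Real.log σ := by
    rw [Real.log_mul (by positivity) (by positivity), Real.log_pow]; push_cast; ring
  have hlβ : Real.log (2 * Real.pi * β ^ 2) = Real.log (2 * Real.pi) + 2 * Real.log β := by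
    rw [Real.log_mul (by positivity) (by positivity), Real.log_pow]; push_cast; ring
  rw [hlσ, hlβ, Real.log_div hβ.ne' hσ.ne']
  have h1 : σ ^ 2 ≠ 0 := by positivity
  have h2 : β ^ 2 ≠ 0 := by positivity
  field_simp
  ring

end kl

/-- KL divergence bound after Gaussian smoothing of a finitely supported measure. -/
theorem kl_gaussian_smoothing_bound (d : ℕ) (hd : 0 < d) (σ β : ℝ)
    (hσ : 0 < σ) (hβ : 0 < β)
    (S : Finset (EuclideanSpace ℝ (Fin d))) (hS : S.Nonempty)
    (w : EuclideanSpace ℝ (Fin d) → ℝ)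
    (hw : ∀ θ ∈ S, 0 ≤ w θ) (hsum : ∑ θ ∈ S, w θ = 1)
    (hKL : Integrable (fun x =>
      (∑ θ ∈ S, w θ * gaussDens d σ (x - θ)) *
        Real.log ((∑ θ ∈ S, w θ * gaussDens d σ (x - θ)) / gaussDens d β x))) :
    ∫ x, (∑ θ ∈ S, w θ * gaussDens d σ (x - θ)) *
        Real.log ((∑ θ ∈ S, w θ * gaussDens d σ (x - θ)) / gaussDens d β x)
      ≤ d * Real.log (β / σ)
        + (d * σ ^ 2 + (S.sup' hS fun θ => ‖θ‖) ^ 2) / (2 * β ^ 2) - d / 2 := by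
  have hq : ∀ x, 0 < gaussDens d β x := gaussDens_pos hβ
  have hpθ : ∀ (x θ : EuclideanSpace ℝ (Fin d)), 0 < gaussDens d σ (x - θ) :=
    fun x θ => gaussDens_pos hσ _
  obtain ⟨θ₀, hθ₀S, hw₀⟩ : ∃ θ ∈ S, w θ ≠ 0 := by
    by_contra h
    push_neg at h
    rw [Finset.sum_eq_zero h] at hsum
    norm_num at hsum
  have hw₀' : 0 < w θ₀ := lt_of_le_of_ne (hw _ hθ₀S) (Ne.symm hw₀)
  have hP : ∀ x, 0 < ∑ θ ∈ S, w θ * gaussDens d σ (x - θ) := by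
    intro x
    have h0 : 0 < w θ₀ * gaussDens d σ (x - θ₀) := by
      have := hpθ x θ₀; positivity
    exact h0.trans_le (Finset.single_le_sum
      (fun θ hθ => mul_nonneg (hw θ hθ) (hpθ x θ).le) hθ₀S)
  have hpt : ∀ x, (∑ θ ∈ S, w θ * gaussDens d σ (x - θ)) *
        Real.log ((∑ θ ∈ S, w θ * gaussDens d σ (x - θ)) / gaussDens d β x)
      ≤ ∑ θ ∈ S, w θ * (gaussDens d σ (x - θ)
          * Real.log (gaussDens d σ (x - θ) / gaussDens d β x)) := by
    intro x
    set P := ∑ θ ∈ S, w θ * gaussDens d σ (x - θ) with hPdef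
    have h3 : ∑ θ ∈ S, (w θ * gaussDens d σ (x - θ)
          * (Real.log P - Real.log (gaussDens d σ (x - θ))))
        ≤ ∑ θ ∈ S, w θ * (P - gaussDens d σ (x - θ)) := by
      refine Finset.sum_le_sum fun θ hθ => ?_
      have hgθ := hpθ x θ
      have hwθ := hw θ hθ
      have hlog : Real.log P - Real.log (gaussDens d σ (x - θ))
          ≤ P / gaussDens d σ (x - θ) - 1 := by
        rw [← Real.log_div (hP x).ne' hgθ.ne']
        exact Real.log_le_sub_one_of_pos (by have := hP x; positivity)
      calc w θ * gaussDens d σ (x - θ) * (Real.log P - Real.log (gaussDens d σ (x - θ)))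
          ≤ w θ * gaussDens d σ (x - θ) * (P / gaussDens d σ (x - θ) - 1) :=
            mul_le_mul_of_nonneg_left hlog (by positivity)
        _ = w θ * (P - gaussDens d σ (x - θ)) := by field_simp
    have h4 : ∑ θ ∈ S, w θ * (P - gaussDens d σ (x - θ)) = 0 := by
      simp_rw [mul_sub]
      rw [Finset.sum_sub_distrib, ← Finset.sum_mul, hsum, one_mul]
      exact sub_self _
    have h5 : ∑ θ ∈ S, (w θ * gaussDens d σ (x - θ) * Real.log P)
        ≤ ∑ θ ∈ S, w θ * (gaussDens d σ (x - θ) * Real.log (gaussDens d σ (x - θ))) := by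
      have hc := h3.trans (le_of_eq h4)
      have hsplit : ∑ θ ∈ S, (w θ * gaussDens d σ (x - θ)
            * (Real.log P - Real.log (gaussDens d σ (x - θ))))
          = ∑ θ ∈ S, (w θ * gaussDens d σ (x - θ) * Real.log P)
            - ∑ θ ∈ S, w θ * (gaussDens d σ (x - θ) * Real.log (gaussDens d σ (x - θ))) := by
        rw [← Finset.sum_sub_distrib]
        exact Finset.sum_congr rfl fun θ _ => by ring
      linarith [hsplit ▸ hc]
    rw [Real.log_div (hP x).ne' (hq x).ne']
    have hrhs : ∑ θ ∈ S, w θ * (gaussDens d σ (x - θ)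
          * Real.log (gaussDens d σ (x - θ) / gaussDens d β x))
        = ∑ θ ∈ S, w θ * (gaussDens d σ (x - θ) * Real.log (gaussDens d σ (x - θ)))
          - P * Real.log (gaussDens d β x) := by
      calc ∑ θ ∈ S, w θ * (gaussDens d σ (x - θ)
            * Real.log (gaussDens d σ (x - θ) / gaussDens d β x))
          = ∑ θ ∈ S, (w θ * (gaussDens d σ (x - θ) * Real.log (gaussDens d σ (x - θ)))
              - w θ * gaussDens d σ (x - θ) * Real.log (gaussDens d β x)) :=
            Finset.sum_congr rfl fun θ _ => by
              rw [Real.log_div (hpθ x θ).ne' (hq x).ne']; ring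
        _ = _ := by rw [Finset.sum_sub_distrib, ← Finset.sum_mul]
    rw [hrhs]
    have hPlog : P * Real.log P = ∑ θ ∈ S, (w θ * gaussDens d σ (x - θ) * Real.log P) := by
      rw [hPdef, Finset.sum_mul]
    have hexp : P * (Real.log P - Real.log (gaussDens d β x))
        = P * Real.log P - P * Real.log (gaussDens d β x) := by ring
    linarith
  have hG : Integrable (fun x => ∑ θ ∈ S, w θ * (gaussDens d σ (x - θ)
      * Real.log (gaussDens d σ (x - θ) / gaussDens d β x))) :=
    integrable_finset_sum _ fun θ _ => (integrable_component hσ hβ θ).const_mul _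
  refine (integral_mono hKL hG fun x => hpt x).trans ?_
  rw [integral_finset_sum _ fun θ _ => (integrable_component hσ hβ θ).const_mul _]
  have hval : ∀ θ ∈ S, (∫ x, w θ * (gaussDens d σ (x - θ)
        * Real.log (gaussDens d σ (x - θ) / gaussDens d β x)))
      = w θ * (d * Real.log (β / σ) + (d * σ ^ 2 + ‖θ‖ ^ 2) / (2 * β ^ 2) - d / 2) :=
    fun θ _ => by rw [integral_const_mul, integral_component hσ hβ θ]
  rw [Finset.sum_congr rfl hval]
  calc ∑ θ ∈ S, w θ * ((d:ℝ) * Real.log (β / σ)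
          + (d * σ ^ 2 + ‖θ‖ ^ 2) / (2 * β ^ 2) - d / 2)
      ≤ ∑ θ ∈ S, w θ * ((d:ℝ) * Real.log (β / σ)
          + (d * σ ^ 2 + (S.sup' hS fun θ => ‖θ‖) ^ 2) / (2 * β ^ 2) - d / 2) := by
        refine Finset.sum_le_sum fun θ hθ => ?_
        refine mul_le_mul_of_nonneg_left ?_ (hw θ hθ)
        have hθR : ‖θ‖ ^ 2 ≤ (S.sup' hS fun θ => ‖θ‖) ^ 2 :=
          pow_le_pow_left₀ (norm_nonneg θ) (Finset.le_sup' _ hθ) 2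
        gcongr
    _ = _ := by rw [← Finset.sum_mul, hsum, one_mul]
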